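/- For every x ∈ X, R_low(F(x)) ≤ R_low(x) and R_up(F(x)) ≤ R_up(x); that is, the lower and upper local return rates are subinvariant under F. -/

import Mathlib

open Filter Topology
open scoped ENNReal

noncomputable section

/-- The `n`-cylinder `C_{x,n}` of `x` for the coding `c` of the system `(X, F)`
(`C_{x,0} = X` by convention). -/
def cylG {X A : Type*} (F : X → X) (c : X → A) (x : X) (n : ℕ) : Set X :=
  {y | ∀ k < n, c (F^[k] y) = c (F^[k] x)}

/-- The Poincaré return time `τ(M) = inf {k ≥ 1 | F^k(M) ∩ M ≠ ∅} ∈ ℕ ∪ {∞}`. -/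
def tauG {X : Type*} (F : X → X) (M : Set X) : ℕ∞ :=
  sInf {e : ℕ∞ | ∃ k : ℕ, e = (k : ℕ∞) ∧ 1 ≤ k ∧ (F^[k] '' M ∩ M).Nonempty}

/-- The lower local return rate `R_low(x) = liminf_n τ(C_{x,n})/n`, valued in `[0,∞]`. -/
def RlowG {X A : Type*} (F : X → X) (c : X → A) (x : X) : ℝ≥0∞ :=
  liminf (fun n : ℕ => (tauG F (cylG F c x n) : ℝ≥0∞) / (n : ℝ≥0∞)) atTop

/-- The upper local return rate `R_up(x) = limsup_n τ(C_{x,n})/n`, valued in `[0,∞]`. -/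
def RupG {X A : Type*} (F : X → X) (c : X → A) (x : X) : ℝ≥0∞ :=
  limsup (fun n : ℕ => (tauG F (cylG F c x n) : ℝ≥0∞) / (n : ℝ≥0∞)) atTop

/-- `τ` is antitone: the return time of a subset is at least that of a superset. -/
lemma tauG_anti {X : Type*} (F : X → X) {M N : Set X} (h : M ⊆ N) :
    tauG F N ≤ tauG F M := by
  apply sInf_le_sInf
  rintro e ⟨k, rfl, hk, z, hz, hzM⟩
  exact ⟨k, rfl, hk, z, Set.image_mono h hz, h hzM⟩

/-- The return time of `F '' M` is at most that of `M`. -/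
lemma tauG_image_le {X : Type*} (F : X → X) (M : Set X) :
    tauG F (F '' M) ≤ tauG F M := by
  apply sInf_le_sInf
  rintro e ⟨k, rfl, hk, z, ⟨y, hy, rfl⟩, hzM⟩
  refine ⟨k, rfl, hk, F (F^[k] y), ⟨F y, ⟨y, hy, rfl⟩, ?_⟩, ⟨F^[k] y, hzM, rfl⟩⟩
  rw [← Function.iterate_succ_apply, Function.iterate_succ_apply']

/-- `F` maps the `(n+1)`-cylinder of `x` into the `n`-cylinder of `F x`. -/
lemma image_cylG_subset {X A : Type*} (F : X → X) (c : X → A) (x : X) (n : ℕ) :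
    F '' cylG F c x (n + 1) ⊆ cylG F c (F x) n := by
  rintro _ ⟨y, hy, rfl⟩ k hk
  have h1 : c (F^[k + 1] y) = c (F^[k + 1] x) := hy (k + 1) (by omega)
  simpa [Function.iterate_succ_apply] using h1

private lemma core_aux (a : ℕ → ℝ≥0∞) {b' b : ℝ≥0∞} (h : b' < b) :
    ∀ᶠ n : ℕ in atTop,
      a (n + 1) / ((n + 1 : ℕ) : ℝ≥0∞) < b' → a (n + 1) / (n : ℝ≥0∞) ≤ b := by
  have hb' : b' ≠ ∞ := (h.trans_le le_top).ne
  have h0 : Tendsto (fun n : ℕ => b' + b' * (n : ℝ≥0∞)⁻¹) atTop (𝓝 b') := by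
    have h1 := ENNReal.Tendsto.const_mul ENNReal.tendsto_inv_nat_nhds_zero
      (Or.inr hb')
    simpa using tendsto_const_nhds.add h1
  filter_upwards [h0.eventually_lt_const h, eventually_ge_atTop 1] with n hn hn1 hlt
  have hne : (n : ℝ≥0∞) ≠ 0 := Nat.cast_ne_zero.mpr (by omega)
  have hnt : (n : ℝ≥0∞) ≠ ∞ := ENNReal.natCast_ne_top n
  have hne1 : ((n : ℝ≥0∞) + 1) ≠ 0 := by simp
  have hnt1 : ((n : ℝ≥0∞) + 1) ≠ ∞ := by
    exact ENNReal.add_ne_top.mpr ⟨hnt, ENNReal.one_ne_top⟩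
  have hlt' : a (n + 1) / ((n : ℝ≥0∞) + 1) < b' := by
    have : (((n + 1 : ℕ)) : ℝ≥0∞) = (n : ℝ≥0∞) + 1 := by push_cast; ring
    rwa [this] at hlt
  have h1 : a (n + 1) < b' * ((n : ℝ≥0∞) + 1) :=
    (ENNReal.div_lt_iff (Or.inl hne1) (Or.inl hnt1)).mp hlt'
  calc a (n + 1) / (n : ℝ≥0∞) ≤ b' * ((n : ℝ≥0∞) + 1) / (n : ℝ≥0∞) :=
        ENNReal.div_le_div_right h1.le _
    _ = b' + b' * (n : ℝ≥0∞)⁻¹ := by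
        rw [mul_add, mul_one, ENNReal.add_div, mul_div_assoc,
          ENNReal.div_self hne hnt, mul_one, div_eq_mul_inv]
    _ ≤ b := hn.le

private lemma shift_liminf (a : ℕ → ℝ≥0∞) :
    liminf (fun n : ℕ => a (n + 1) / (n : ℝ≥0∞)) atTop ≤
      liminf (fun n : ℕ => a n / (n : ℝ≥0∞)) atTop := by
  refine le_of_forall_gt_imp_ge_of_dense fun b hb => ?_
  obtain ⟨b', hb1, hb2⟩ := exists_between hb
  have hfreq : ∃ᶠ n : ℕ in atTop, a (n + 1) / ((n + 1 : ℕ) : ℝ≥0∞) < b' := by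
    have h := frequently_lt_of_liminf_lt (by isBoundedDefault) hb1
    rw [frequently_atTop] at h ⊢
    intro N
    obtain ⟨m, hm, hm2⟩ := h (N + 1)
    refine ⟨m - 1, by omega, ?_⟩
    have hm1 : m - 1 + 1 = m := by omega
    rw [hm1]
    exact hm2
  exact liminf_le_of_frequently_le
    ((hfreq.and_eventually (core_aux a hb2)).mono fun n hn => hn.2 hn.1)

private lemma shift_limsup (a : ℕ → ℝ≥0∞) :
    limsup (fun n : ℕ => a (n + 1) / (n : ℝ≥0∞)) atTop ≤
      limsup (fun n : ℕ => a n / (n : ℝ≥0∞)) atTop := by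
  refine le_of_forall_gt_imp_ge_of_dense fun b hb => ?_
  obtain ⟨b', hb1, hb2⟩ := exists_between hb
  have hev : ∀ᶠ n : ℕ in atTop, a (n + 1) / ((n + 1 : ℕ) : ℝ≥0∞) < b' :=
    (tendsto_add_atTop_nat 1).eventually (eventually_lt_of_limsup_lt hb1)
  exact limsup_le_of_le (by isBoundedDefault)
    ((hev.and (core_aux a hb2)).mono fun n hn => hn.2 hn.1)

/-- For every `x ∈ X`, `R_low(F x) ≤ R_low(x)` and
`R_up(F x) ≤ R_up(x)`: the local return rates are subinvariant under `F`. -/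
theorem statement18 {X A : Type*} [Finite A] (F : X → X) (c : X → A) (x : X) :
    RlowG F c (F x) ≤ RlowG F c x ∧ RupG F c (F x) ≤ RupG F c x := by
  set a : ℕ → ℝ≥0∞ := fun n => (tauG F (cylG F c x n) : ℝ≥0∞) with ha
  have key : ∀ n : ℕ, (tauG F (cylG F c (F x) n) : ℝ≥0∞) / (n : ℝ≥0∞) ≤
      a (n + 1) / (n : ℝ≥0∞) := by
    intro n
    apply ENNReal.div_le_div_right
    rw [ENat.toENNReal_le]
    exact (tauG_anti F (image_cylG_subset F c x n)).trans (tauG_image_le F _)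
  constructor
  · exact (liminf_le_liminf (Eventually.of_forall key)).trans (shift_liminf a)
  · exact (limsup_le_limsup (Eventually.of_forall key)).trans (shift_limsup a)
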